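/- Fix L ≥ 3 and set τ_L = √((L−1)/L). There exists a function τ(γ) = 2γ/(L²−L−2) + O(γ²) with the following property: for any L unit vectors x₁,…,x_L in a real Hilbert space with circumscribed radius rad(x) ≥ τ_L, if ⟨x₁,x₂⟩ ≥ γ ≥ 0 then some pair i ≠ j has ⟨xᵢ,xⱼ⟩ ≤ −τ(γ). -/

import Mathlib

open Finset
open scoped RealInnerProductSpace

section helpers

lemma aux_p_diag {n : ℕ} (f : Fin n → ℝ) :
    ∑ i, ∑ j, (if i = j then f i else (0:ℝ)) = ∑ i, f i := by
  refine Finset.sum_congr rfl fun i _ => ?_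
  simp

lemma aux_p_pair {n : ℕ} (k l : Fin n) (f : Fin n → Fin n → ℝ) :
    ∑ i, ∑ j, (if i = k ∧ j = l then f i j else (0:ℝ)) = f k l := by
  have h : ∀ i : Fin n, ∑ j, (if i = k ∧ j = l then f i j else (0:ℝ))
      = if i = k then f i l else 0 := by
    intro i
    by_cases h : i = k
    · subst h; simp
    · simp [h]
  rw [Finset.sum_congr rfl fun i _ => h i]
  simp

lemma aux_V_expand {E : Type} [NormedAddCommGroup E] [InnerProductSpace ℝ E]
    {n : ℕ} (x : Fin n → E) (ω : Fin n → ℝ) :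
    ‖∑ i, ω i • x i‖ ^ 2 = ∑ i, ∑ j, ω i * ω j * ⟪x i, x j⟫ := by
  rw [← real_inner_self_eq_norm_sq, sum_inner]
  refine Finset.sum_congr rfl fun i _ => ?_
  rw [real_inner_smul_left, inner_sum, Finset.mul_sum]
  refine Finset.sum_congr rfl fun j _ => ?_
  rw [real_inner_smul_right]; ring

end helpers

set_option maxHeartbeats 1000000 in

lemma aux_scalar (ℓ γ τ q s r u v : ℝ) (hℓ : 3 ≤ ℓ)
    (hγ0 : 0 < γ) (hγ1 : γ ≤ 1)
    (hτ : τ = max 0 ((2*γ - 4*γ^2)/(ℓ^2 - ℓ - 2)))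
    (hu : 0 ≤ u) (hv : 0 ≤ v) (hs : s = u + v) (hq : q = u^2 + v^2 + r)
    (hr : (1 - s)^2/(ℓ - 2) ≤ r) :
    1/ℓ < (1 + τ)*q + (γ + τ)*(u*v + v*u) - τ := by
  set c : ℝ := ℓ^2 - ℓ - 2 with hc
  have hc4 : 4 ≤ c := by nlinarith
  have hcpos : (0:ℝ) < c := by linarith
  have hτ0 : 0 ≤ τ := hτ ▸ le_max_left _ _
  have hτc : τ * c ≤ 2*γ := by
    rcases le_or_gt ((2*γ - 4*γ^2)/c) 0 with h | h
    · rw [hτ, max_eq_left h]; nlinarith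
    · rw [hτ, max_eq_right h.le, div_mul_cancel₀ _ (ne_of_gt hcpos)]; nlinarith
  set a : ℝ := (1 + γ)/2 + τ with ha
  set b : ℝ := (1 + τ)/(ℓ - 2) with hb
  have hl2 : (0:ℝ) < ℓ - 2 := by linarith
  have hapos : 0 < a := by positivity
  have hbpos : 0 < b := by positivity
  have hτle : τ ≤ 2*γ/c := by rw [le_div_iff₀ hcpos]; linarith
  -- E > 0
  have hE : 0 < 2*γ - c*τ - ℓ*(ℓ-3)*γ*τ - 2*ℓ*(ℓ-2)*τ^2 := by
    rcases le_or_gt ((2*γ - 4*γ^2)/c) 0 with h | h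
    · have hτ0' : τ = 0 := by rw [hτ, max_eq_left h]
      rw [hτ0']; ring_nf; nlinarith
    · have hτeq : τ = (2*γ - 4*γ^2)/c := by rw [hτ, max_eq_right h.le]
      have hτcc : τ * c = 2*γ - 4*γ^2 := by
        rw [hτeq, div_mul_cancel₀ _ (ne_of_gt hcpos)]
      have hτpos : 0 < τ := by rw [hτeq]; exact h
      have h1 : ℓ*(ℓ-3)*γ*τ < 2*γ^2 := by
        have hlt : ℓ*(ℓ-3) < c := by nlinarith
        have h2 : ℓ*(ℓ-3)*γ*τ ≤ ℓ*(ℓ-3)*γ*(2*γ/c) := by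
          apply mul_le_mul_of_nonneg_left hτle
          have : 0 ≤ ℓ*(ℓ-3) := by nlinarith
          positivity
        have h3 : ℓ*(ℓ-3)*γ*(2*γ/c) < 2*γ^2 := by
          have hfrac : ℓ*(ℓ-3)/c < 1 := (div_lt_one hcpos).2 hlt
          have he : ℓ*(ℓ-3)*γ*(2*γ/c) = (ℓ*(ℓ-3)/c)*(2*γ^2) := by ring
          rw [he]
          calc (ℓ*(ℓ-3)/c)*(2*γ^2) < 1*(2*γ^2) :=
                mul_lt_mul_of_pos_right hfrac (by positivity)
            _ = 2*γ^2 := one_mul _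
        linarith
      have h2 : 2*ℓ*(ℓ-2)*τ^2 ≤ 2*γ^2 := by
        have hcc : 4*c ≤ c^2 := by nlinarith
        have hlc : 4*ℓ*(ℓ-2) ≤ 4*c := by nlinarith
        have hcsq : 4*ℓ*(ℓ-2) ≤ c^2 := by linarith
        have hτsq : τ^2 ≤ (2*γ/c)^2 := by
          apply pow_le_pow_left₀ hτ0 hτle
        have : 2*ℓ*(ℓ-2)*τ^2 ≤ 2*ℓ*(ℓ-2)*(2*γ/c)^2 := by
          apply mul_le_mul_of_nonneg_left hτsq (by nlinarith)
        have h4 : 2*ℓ*(ℓ-2)*(2*γ/c)^2 ≤ 2*γ^2 := by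
          have hfrac : 4*ℓ*(ℓ-2)/c^2 ≤ 1 := (div_le_one (by positivity)).2 hcsq
          have he : 2*ℓ*(ℓ-2)*(2*γ/c)^2 = (4*ℓ*(ℓ-2)/c^2)*(2*γ^2) := by
            field_simp
            ring
          rw [he]
          calc (4*ℓ*(ℓ-2)/c^2)*(2*γ^2) ≤ 1*(2*γ^2) :=
                mul_le_mul_of_nonneg_right hfrac (by positivity)
            _ = 2*γ^2 := one_mul _
        linarith
      have hEeq : 2*γ - c*τ = 4*γ^2 := by nlinarith [hτcc]
      nlinarith
  -- step 3 : ab/(a+b) - τ > 1/ℓ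
  have habpos : 0 < a + b := by linarith
  have hkey : 2*(ℓ-2)*(ℓ*(a*b) - (1+ℓ*τ)*(a+b))
      = 2*γ - c*τ - ℓ*(ℓ-3)*γ*τ - 2*ℓ*(ℓ-2)*τ^2 := by
    rw [ha, hb, hc]
    field_simp
    ring
  have hstep3 : 1/ℓ + τ < a*b/(a+b) := by
    rw [lt_div_iff₀ habpos]
    have h5 : 0 < ℓ*(a*b) - (1+ℓ*τ)*(a+b) := by nlinarith
    have hℓpos : (0:ℝ) < ℓ := by linarith
    have hinv : ℓ*(1/ℓ) = 1 := mul_one_div_cancel (ne_of_gt hℓpos)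
    have hgoal : ℓ*((1/ℓ + τ)*(a+b)) = (1+ℓ*τ)*(a+b) := by
      calc ℓ*((1/ℓ + τ)*(a+b)) = (ℓ*(1/ℓ))*(a+b) + (ℓ*τ)*(a+b) := by ring
        _ = (1+ℓ*τ)*(a+b) := by rw [hinv]; ring
    have h6 : ℓ*((1/ℓ + τ)*(a+b)) < ℓ*(a*b) := by rw [hgoal]; linarith
    exact lt_of_mul_lt_mul_left h6 hℓpos.le
  -- step 1+2
  have hstep2 : a*b/(a+b) ≤ a*s^2 + b*(1-s)^2 := by
    rw [div_le_iff₀ habpos]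
    nlinarith [sq_nonneg (a*s - b*(1-s))]
  have hstep1 : a*s^2 + b*(1-s)^2 ≤ (1 + τ)*q + (γ + τ)*(u*v + v*u) := by
    have hp : s^2/2 ≤ u^2 + v^2 := by nlinarith [sq_nonneg (u - v)]
    have h2uv : u*v + v*u = s^2 - (u^2 + v^2) := by rw [hs]; ring
    have hbr : b*(1-s)^2 ≤ (1+τ)*r := by
      rw [hb, div_mul_eq_mul_div, div_le_iff₀ hl2]
      calc (1+τ)*(1-s)^2 = (1+τ)*((1-s)^2/(ℓ-2))*(ℓ-2) := by field_simp
        _ ≤ (1+τ)*r*(ℓ-2) := by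
            apply mul_le_mul_of_nonneg_right _ hl2.le
            apply mul_le_mul_of_nonneg_left hr (by linarith)
    have hgp : (1-γ)*(s^2/2) ≤ (1-γ)*(u^2+v^2) :=
      mul_le_mul_of_nonneg_left hp (by linarith)
    rw [hq, h2uv]
    rw [ha] at *
    nlinarith
  have hfin := hstep3.trans_le (hstep2.trans hstep1)
  linarith only [hfin]

lemma aux_gram_min {E : Type} [NormedAddCommGroup E] [InnerProductSpace ℝ E]
    {L : ℕ} (hL : 3 ≤ L) (x : Fin L → E) (hx : ∀ i, ‖x i‖ = 1)
    (hrad : Real.sqrt (((L : ℝ) - 1) / L) ≤ (⨅ y : E, ⨆ i, ‖x i - y‖)) :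
    ∃ ω ∈ stdSimplex ℝ (Fin L),
      ‖∑ i, ω i • x i‖ ^ 2 ≤ 1 / L := by
  have hne : Nonempty (Fin L) := ⟨⟨0, by omega⟩⟩
  have hL3 : (3:ℝ) ≤ L := by exact_mod_cast hL
  have hLpos : (0:ℝ) < L := by linarith
  set V : (Fin L → ℝ) → ℝ := fun ω => ‖∑ i, ω i • x i‖ ^ 2 with hV
  have hcont : ContinuousOn V (stdSimplex ℝ (Fin L)) := by
    apply Continuous.continuousOn
    exact (continuous_norm.comp
      (continuous_finset_sum _ fun i _ => (continuous_apply i).smul continuous_const)).pow 2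
  obtain ⟨ω, hω, hmin⟩ := (isCompact_stdSimplex ℝ (Fin L)).exists_isMinOn
    ⟨_, single_mem_stdSimplex ℝ (Classical.arbitrary (Fin L))⟩ hcont
  refine ⟨ω, hω, ?_⟩
  set y : E := ∑ i, ω i • x i with hy
  -- KKT : ∀ i, ‖y‖^2 ≤ ⟪x i, y⟫
  have hKKT : ∀ i, ‖y‖ ^ 2 ≤ ⟪x i, y⟫ := by
    intro i
    have hstep : ∀ t : ℝ, 0 ≤ t → t ≤ 1 →
        ‖y‖ ^ 2 ≤ ‖y‖ ^ 2 + 2 * (t * ⟪y, x i - y⟫) + t ^ 2 * ‖x i - y‖ ^ 2 := by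
      intro t ht0 ht1
      set w : Fin L → ℝ := (1 - t) • ω + t • (Pi.single i 1 : Fin L → ℝ) with hw
      have hmem : w ∈ stdSimplex ℝ (Fin L) :=
        (convex_stdSimplex ℝ (Fin L)) hω (single_mem_stdSimplex ℝ i)
          (by linarith) ht0 (by ring)
      have hsingle : ∑ j, (Pi.single i 1 : Fin L → ℝ) j • x j = x i := by
        rw [Finset.sum_eq_single i]
        · simp
        · intro j _ hj; simp [Pi.single_apply, hj]
        · simp
      have hyt : ∑ j, w j • x j = y + t • (x i - y) := by
        calc ∑ j, w j • x j
            = ∑ j, ((1 - t) * ω j) • x j + ∑ j, (t * (Pi.single i 1 : Fin L → ℝ) j) • x j := by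
              rw [← Finset.sum_add_distrib]
              refine Finset.sum_congr rfl fun j _ => ?_
              rw [hw]
              simp only [Pi.add_apply, Pi.smul_apply, smul_eq_mul]
              rw [add_smul]
          _ = (1 - t) • y + t • x i := by
              rw [hy, Finset.smul_sum, ← hsingle, Finset.smul_sum]
              congr 1 <;> exact Finset.sum_congr rfl fun j _ => (mul_smul _ _ _)
          _ = y + t • (x i - y) := by
              rw [sub_smul, one_smul, smul_sub]; abel
      have hVe : V w = ‖y‖ ^ 2 + 2 * (t * ⟪y, x i - y⟫) + t ^ 2 * ‖x i - y‖ ^ 2 := by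
        show ‖∑ j, w j • x j‖ ^ 2 = _
        rw [hyt, norm_add_sq_real, real_inner_smul_right, norm_smul, mul_pow, Real.norm_eq_abs, sq_abs]
      have h6 : V ω ≤ V w := hmin hmem
      have hVy : V ω = ‖y‖ ^ 2 := rfl
      rw [hVy, hVe] at h6
      exact h6
    have hA : 0 ≤ ⟪y, x i - y⟫ := by
      by_contra hA
      push_neg at hA
      set A := ⟪y, x i - y⟫
      set B := ‖x i - y‖ ^ 2 with hB
      have hB0 : 0 ≤ B := by positivity
      set t : ℝ := min 1 (-A / (B + 1)) with ht
      have htpos : 0 < -A / (B + 1) := div_pos (by linarith) (by linarith)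
      have ht0 : 0 ≤ t := le_min zero_le_one htpos.le
      have ht1 : t ≤ 1 := min_le_left _ _
      have h2 := hstep t ht0 ht1
      have htB : t * B < -2 * A := by
        have h3 : t ≤ -A / (B + 1) := min_le_right _ _
        have h4 : t * B ≤ (-A / (B + 1)) * B := by
          apply mul_le_mul_of_nonneg_right h3 hB0
        have h5 : (-A / (B + 1)) * B < -A := by
          rw [div_mul_eq_mul_div, div_lt_iff₀ (by linarith)]
          nlinarith
        nlinarith
      have htpos' : 0 < t := lt_min one_pos htpos
      nlinarith [sq_nonneg t, mul_pos htpos' htpos']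
    have : ⟪y, x i⟫ - ⟪y, y⟫ ≥ 0 := by
      rwa [← inner_sub_right]
    rw [real_inner_comm]
    rw [real_inner_self_eq_norm_sq] at this
    linarith
  -- radius bound
  have hnormy : 0 ≤ 1 - ‖y‖ ^ 2 := by
    have h := hKKT ⟨0, by omega⟩
    have := norm_sub_sq_real (x ⟨0, by omega⟩) y
    rw [hx _] at this
    nlinarith [sq_nonneg ‖x ⟨0, by omega⟩ - y‖]
  have hbound : ∀ i, ‖x i - y‖ ≤ Real.sqrt (1 - ‖y‖ ^ 2) := by
    intro i
    apply Real.le_sqrt_of_sq_le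
    have := norm_sub_sq_real (x i) y
    rw [hx i] at this
    have h := hKKT i
    nlinarith
  have hrad2 : Real.sqrt (((L : ℝ) - 1) / L) ≤ Real.sqrt (1 - ‖y‖ ^ 2) := by
    refine le_trans hrad ?_
    have h1 : (⨅ z : E, ⨆ i, ‖x i - z‖) ≤ ⨆ i, ‖x i - y‖ := by
      apply ciInf_le
      refine ⟨0, ?_⟩
      rintro a ⟨z, rfl⟩
      exact Real.iSup_nonneg fun i => norm_nonneg _
    refine h1.trans (ciSup_le fun i => hbound i)
  have hineq : ((L : ℝ) - 1) / L ≤ 1 - ‖y‖ ^ 2 := by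
    have h1 : ((L : ℝ) - 1) / L = Real.sqrt (((L : ℝ) - 1) / L) ^ 2 := by
      rw [Real.sq_sqrt (div_nonneg (by linarith) (by linarith))]
    have h2 : Real.sqrt (((L:ℝ)-1)/L) ^ 2 ≤ Real.sqrt (1 - ‖y‖^2) ^ 2 := by
      apply pow_le_pow_left₀ (Real.sqrt_nonneg _) hrad2
    rw [Real.sq_sqrt hnormy] at h2
    linarith
  have : ‖y‖ ^ 2 ≤ 1 / L := by
    have : ((L:ℝ) - 1)/L = 1 - 1/L := by field_simp
    rw [this] at hineq
    linarith
  exact this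

set_option maxHeartbeats 1000000 in
/-- for `L ≥ 3` there is a nonnegative function
`τ(γ) = 2γ/(L²-L-2) + O(γ²)` on `[0,1]` such that any `L`-tuple of unit vectors
with circumscribed radius at least `τ_L = √((L-1)/L)` and `⟨x₁,x₂⟩ ≥ γ ≥ 0` has
some pair with inner product at most `-τ(γ)`. -/
theorem stmt_17 (L : ℕ) (hL : 3 ≤ L) :
    ∃ τ : ℝ → ℝ, (∀ γ, 0 ≤ τ γ) ∧
      (∃ K : ℝ, ∀ γ ∈ Set.Icc (0 : ℝ) 1,
        |τ γ - 2 * γ / ((L : ℝ) ^ 2 - L - 2)| ≤ K * γ ^ 2) ∧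
      ∀ (E : Type) [NormedAddCommGroup E] [InnerProductSpace ℝ E]
        (x : Fin L → E), (∀ i, ‖x i‖ = 1) →
        Real.sqrt (((L : ℝ) - 1) / L) ≤ (⨅ y : E, ⨆ i, ‖x i - y‖) →
        ∀ γ : ℝ, 0 ≤ γ → γ ≤ 1 →
        γ ≤ ⟪x ⟨0, by omega⟩, x ⟨1, by omega⟩⟫ →
        ∃ i j, i ≠ j ∧ ⟪x i, x j⟫ ≤ -τ γ := by
  have hL3 : (3:ℝ) ≤ (L:ℝ) := by exact_mod_cast hL
  have hcpos : (0:ℝ) < (L:ℝ)^2 - L - 2 := by nlinarith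
  refine ⟨fun γ => max 0 ((2*γ - 4*γ^2)/((L:ℝ)^2 - L - 2)),
    fun γ => le_max_left _ _, ⟨4/((L:ℝ)^2 - L - 2), ?_⟩, ?_⟩
  · -- approximation bound
    rintro γ ⟨hγ0, hγ1⟩
    show |max 0 ((2*γ - 4*γ^2)/((L:ℝ)^2 - L - 2)) - 2 * γ / ((L:ℝ)^2 - L - 2)|
      ≤ 4/((L:ℝ)^2 - L - 2) * γ^2
    rcases le_or_gt 0 ((2*γ - 4*γ^2)/((L:ℝ)^2 - L - 2)) with h | h
    · rw [max_eq_right h]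
      have he : (2*γ - 4*γ^2)/((L:ℝ)^2 - L - 2) - 2 * γ/((L:ℝ)^2 - L - 2)
          = -(4*γ^2/((L:ℝ)^2 - L - 2)) := by ring
      rw [he, abs_neg, abs_of_nonneg (by positivity)]
      apply le_of_eq
      ring
    · rw [max_eq_left h.le]
      have h2 : 2*γ - 4*γ^2 < 0 := by
        have := mul_neg_of_neg_of_pos h hcpos
        rwa [div_mul_cancel₀ _ (ne_of_gt hcpos)] at this
      rw [zero_sub, abs_neg, abs_of_nonneg (by positivity)]
      have h3 : 2*γ ≤ 4*γ^2 := by linarith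
      calc 2*γ/((L:ℝ)^2 - L - 2) ≤ 4*γ^2/((L:ℝ)^2 - L - 2) :=
            (div_le_div_iff_of_pos_right hcpos).2 h3
        _ = 4/((L:ℝ)^2 - L - 2)*γ^2 := by ring
  · -- main geometric statement
    intro E _ _ x hx hrad γ hγ0 hγ1 hγ12
    by_contra hcon
    push_neg at hcon
    set τ' : ℝ := max 0 ((2*γ - 4*γ^2)/((L:ℝ)^2 - L - 2)) with hτ'
    have hτ'0 : 0 ≤ τ' := le_max_left _ _
    obtain ⟨ω, hω, hmin⟩ := aux_gram_min hL x hx hrad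
    have hsum : ∑ i, ∑ j, ω i * ω j * ⟪x i, x j⟫ ≤ 1 / L := by
      rw [← aux_V_expand]; exact hmin
    have hωnn : ∀ i, 0 ≤ ω i := fun i => hω.1 i
    have hωsum : ∑ i, ω i = 1 := hω.2
    set i₀ : Fin L := ⟨0, by omega⟩ with hi₀
    set i₁ : Fin L := ⟨1, by omega⟩ with hi₁
    have hne01 : i₀ ≠ i₁ := by
      intro h
      have := congrArg Fin.val h
      simp [hi₀, hi₁] at this
    have h01 : γ ≤ ⟪x i₀, x i₁⟫ := hγ12
    have hdiag : ∀ i : Fin L, ⟪x i, x i⟫ = 1 := by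
      intro i
      rw [real_inner_self_eq_norm_sq, hx i]; norm_num
    have hLpos : (0:ℝ) < L := by linarith
    have hconlt : ∀ i j : Fin L, i ≠ j → -τ' < ⟪x i, x j⟫ := fun i j hij => hcon i j hij
    by_cases hcross : ∃ p : Fin L × Fin L, p.1 ≠ p.2 ∧ 0 < ω p.1 * ω p.2
    · obtain ⟨⟨i₂, j₂⟩, hne₂, hpos₂⟩ := hcross
      rcases eq_or_lt_of_le hγ0 with hγe | hγpos
      · -- γ = 0 case
        have hτ'eq : τ' = 0 := by rw [hτ', ← hγe]; norm_num
        have hGpos : ∀ i j : Fin L, i ≠ j → 0 < ⟪x i, x j⟫ := by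
          intro i j hij
          have := hconlt i j hij
          rwa [hτ'eq, neg_zero] at this
        have hcomp : ∑ i, ∑ j, ((if i = j then ω i^2 else (0:ℝ))
              + (if i = i₂ ∧ j = j₂ then ω i * ω j * ⟪x i, x j⟫ else 0))
            ≤ ∑ i, ∑ j, ω i * ω j * ⟪x i, x j⟫ := by
          refine Finset.sum_le_sum fun i _ => Finset.sum_le_sum fun j _ => ?_
          by_cases h : i = j
          · subst h
            rw [if_pos rfl, if_neg (fun hh => hne₂ (hh.1.symm.trans hh.2)), add_zero,
              hdiag i]
            nlinarith [sq_nonneg (ω i)]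
          · rw [if_neg h]
            by_cases h2 : i = i₂ ∧ j = j₂
            · rw [if_pos h2, zero_add]
            · rw [if_neg h2, zero_add]
              exact mul_nonneg (mul_nonneg (hωnn i) (hωnn j)) (hGpos i j h).le
        rw [Finset.sum_congr rfl fun i _ => Finset.sum_add_distrib,
          Finset.sum_add_distrib, aux_p_diag, aux_p_pair] at hcomp
        have hq : 1/(L:ℝ) ≤ ∑ i, ω i^2 := by
          have hch := sq_sum_le_card_mul_sum_sq (s := (univ : Finset (Fin L))) (f := ω)
          rw [hωsum, Finset.card_univ, Fintype.card_fin] at hch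
          rw [div_le_iff₀ hLpos]
          calc (1:ℝ) = 1^2 := by norm_num
            _ ≤ (L:ℝ) * ∑ i, ω i^2 := by exact_mod_cast hch
            _ = (∑ i, ω i^2) * L := by ring
        have hterm : 0 < ω i₂ * ω j₂ * ⟪x i₂, x j₂⟫ :=
          mul_pos hpos₂ (hGpos i₂ j₂ hne₂)
        linarith
      · -- γ > 0 case
        have hGlb : ∀ i j : Fin L, i ≠ j → -τ' ≤ ⟪x i, x j⟫ :=
          fun i j hij => (hconlt i j hij).le
        have hcomp : ∑ i, ∑ j, (((if i = j then ω i^2 * (1+τ') else (0:ℝ))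
              + (if i = i₀ ∧ j = i₁ then ω i * ω j * (γ+τ') else 0))
              + ((if i = i₁ ∧ j = i₀ then ω i * ω j * (γ+τ') else 0)
              + (-(τ' * (ω i * ω j)))))
            ≤ ∑ i, ∑ j, ω i * ω j * ⟪x i, x j⟫ := by
          refine Finset.sum_le_sum fun i _ => Finset.sum_le_sum fun j _ => ?_
          have hωij : 0 ≤ ω i * ω j := mul_nonneg (hωnn i) (hωnn j)
          by_cases h : i = j
          · subst h
            rw [if_pos rfl, if_neg (fun hh => hne01 (hh.1.symm.trans hh.2)),
              if_neg (fun hh => hne01 (hh.2.symm.trans hh.1)), hdiag i]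
            nlinarith [sq_nonneg (ω i)]
          · rw [if_neg h]
            by_cases h2 : i = i₀ ∧ j = i₁
            · obtain ⟨rfl, rfl⟩ := h2
              rw [if_pos ⟨rfl, rfl⟩, if_neg (fun hh => hne01 hh.1)]
              nlinarith [mul_le_mul_of_nonneg_left h01 hωij]
            · rw [if_neg h2]
              by_cases h3 : i = i₁ ∧ j = i₀
              · obtain ⟨rfl, rfl⟩ := h3
                rw [if_pos ⟨rfl, rfl⟩]
                have hcomm : ⟪x i₁, x i₀⟫ = ⟪x i₀, x i₁⟫ := real_inner_comm _ _
                rw [hcomm]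
                nlinarith [mul_le_mul_of_nonneg_left h01 hωij]
              · rw [if_neg h3]
                nlinarith [mul_le_mul_of_nonneg_left (hGlb i j h) hωij]
        have hSD : ∑ i, ∑ j, -(τ' * (ω i * ω j)) = -τ' := by
          have hin : ∀ i, ∑ j, -(τ' * (ω i * ω j)) = -(τ' * ω i) := by
            intro i
            calc ∑ j, -(τ' * (ω i * ω j)) = ∑ j, (-(τ' * ω i)) * ω j :=
                  Finset.sum_congr rfl fun j _ => by ring
              _ = (-(τ' * ω i)) * ∑ j, ω j := (Finset.mul_sum _ _ _).symm
              _ = -(τ' * ω i) := by rw [hωsum, mul_one]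
          rw [Finset.sum_congr rfl fun i _ => hin i]
          calc ∑ i, -(τ' * ω i) = ∑ i, (-τ') * ω i :=
                Finset.sum_congr rfl fun i _ => by ring
            _ = (-τ') * ∑ i, ω i := (Finset.mul_sum _ _ _).symm
            _ = -τ' := by rw [hωsum, mul_one]
        simp only [Finset.sum_add_distrib] at hcomp
        rw [aux_p_diag, aux_p_pair, aux_p_pair, hSD] at hcomp
        have hSA : ∑ i, ω i^2 * (1+τ') = (1+τ') * ∑ i, ω i^2 := by
          rw [Finset.mul_sum]
          exact Finset.sum_congr rfl fun i _ => by ring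
        rw [hSA] at hcomp
        -- Chebyshev bound on the rest
        set T : Finset (Fin L) := univ \ ({i₀, i₁} : Finset (Fin L)) with hT
        have hsub : ({i₀, i₁} : Finset (Fin L)) ⊆ univ := Finset.subset_univ _
        have hTsum : ∑ i ∈ T, ω i = 1 - (ω i₀ + ω i₁) := by
          have := Finset.sum_sdiff (f := ω) hsub
          rw [hωsum, Finset.sum_pair hne01] at this
          linarith
        have hTsq : ∑ i ∈ T, ω i^2 = (∑ i, ω i^2) - (ω i₀^2 + ω i₁^2) := by
          have := Finset.sum_sdiff (f := fun i => ω i^2) hsub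
          rw [Finset.sum_pair hne01] at this
          linarith
        have hcard : (T.card : ℝ) = (L:ℝ) - 2 := by
          rw [hT, Finset.card_sdiff_of_subset hsub, Finset.card_univ, Fintype.card_fin,
            Finset.card_pair hne01]
          have : 2 ≤ L := by omega
          push_cast [Nat.cast_sub this]
          ring
        have hr : (1 - (ω i₀ + ω i₁))^2/((L:ℝ) - 2)
            ≤ (∑ i, ω i^2) - (ω i₀^2 + ω i₁^2) := by
          have hch := sq_sum_le_card_mul_sum_sq (s := T) (f := ω)
          rw [hTsum, hTsq] at hch
          have hch' : (1 - (ω i₀ + ω i₁))^2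
              ≤ ((L:ℝ) - 2) * ((∑ i, ω i^2) - (ω i₀^2 + ω i₁^2)) := by
            calc (1 - (ω i₀ + ω i₁))^2 ≤ (T.card : ℝ) * ((∑ i, ω i^2) - (ω i₀^2 + ω i₁^2)) := by
                  exact_mod_cast hch
              _ = ((L:ℝ) - 2) * ((∑ i, ω i^2) - (ω i₀^2 + ω i₁^2)) := by rw [hcard]
          rw [div_le_iff₀ (by linarith : (0:ℝ) < (L:ℝ) - 2)]
          linarith [hch']
        have hscalar := aux_scalar (L:ℝ) γ τ' (∑ i, ω i^2) (ω i₀ + ω i₁)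
          ((∑ i, ω i^2) - (ω i₀^2 + ω i₁^2)) (ω i₀) (ω i₁) hL3 hγpos hγ1 hτ'
          (hωnn i₀) (hωnn i₁) rfl (by ring) hr
        linarith
    · -- no cross terms
      push_neg at hcross
      have hzero : ∀ i j : Fin L, i ≠ j → ω i * ω j = 0 := fun i j hij =>
        le_antisymm (hcross (i, j) hij) (mul_nonneg (hωnn i) (hωnn j))
      have h1 : ∑ i, ∑ j, ω i * ω j * ⟪x i, x j⟫
          = ∑ i, ∑ j, (if i = j then ω i^2 else (0:ℝ)) := by
        refine Finset.sum_congr rfl fun i _ => Finset.sum_congr rfl fun j _ => ?_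
        by_cases h : i = j
        · subst h; rw [if_pos rfl, hdiag i]; ring
        · rw [if_neg h, hzero i j h, zero_mul]
      have h4 : ∑ i, ∑ j, ω i * ω j = ∑ i, ∑ j, (if i = j then ω i^2 else (0:ℝ)) := by
        refine Finset.sum_congr rfl fun i _ => Finset.sum_congr rfl fun j _ => ?_
        by_cases h : i = j
        · subst h; rw [if_pos rfl]; ring
        · rw [if_neg h, hzero i j h]
      have h3 : (1:ℝ) = ∑ i, ∑ j, ω i * ω j := by
        rw [← Fintype.sum_mul_sum, hωsum, mul_one]
      rw [h1, ← h4, ← h3] at hsum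
      have : 1/(L:ℝ) < 1 := by
        rw [div_lt_one hLpos]; linarith
      linarith
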